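/- arXiv:1604.07328 — 2 statements merged into one kernel-verified Lean document; each statement's English description precedes it below -/
import Mathlib

section
/- If d = [d_1 ≥ … ≥ d_k] is a partition of N in which all parts are odd, then in the transpose partition ᵗd, consecutive parts differ in parity structure as follows: the multiplicity of each part value of ᵗd other than the largest part is even; the largest part of ᵗd is k and occurs with multiplicity d_k. -/
/-- A partition is encoded as a weakly decreasing function `d : ℕ → ℕ` giving its
(0-indexed) parts.  Its transpose has `i`-th part the number of indices `j` with
`d j ≥ i + 1`. -/
noncomputable def ptranspose (d : ℕ → ℕ) : ℕ → ℕ :=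
  fun i => Nat.card {j : ℕ | i < d j}

lemma ptranspose_eq_of (d : ℕ → ℕ) (hd : Antitone d) (i n : ℕ)
    (h1 : d n ≤ i) (h2 : ∀ j < n, i < d j) : ptranspose d i = n := by
  have hset : {j : ℕ | i < d j} = Set.Iio n := by
    ext j
    simp only [Set.mem_setOf_eq, Set.mem_Iio]
    constructor
    · intro hj
      by_contra h
      push_neg at h
      exact absurd hj (not_lt.mpr ((hd h).trans h1))
    · exact h2 j
  rw [ptranspose]
  simp only [hset]
  rw [Nat.card_coe_set_eq]
  simp [Set.ncard_eq_toFinset_card', Set.toFinset_Iio]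

/-- If `d = [d_1 ≥ … ≥ d_k]` is a partition (with exactly `k` nonzero parts) all of
whose parts are odd, then in the transpose partition `ᵗd`: the largest part is `k`
and occurs with multiplicity `d_k`, and every other (positive) part value occurs
with even multiplicity. -/
theorem transpose_of_odd_partition (k : ℕ) (hk : 0 < k) (d : ℕ → ℕ)
    (hd : Antitone d) (hsupp : ∀ i, 0 < d i ↔ i < k)
    (hodd : ∀ i < k, Odd (d i)) :
    ptranspose d 0 = k ∧
    Nat.card {i : ℕ | ptranspose d i = k} = d (k - 1) ∧
    ∀ m : ℕ, 0 < m → m ≠ k → Even (Nat.card {i : ℕ | ptranspose d i = m}) := by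
  have hdk : ∀ j, k ≤ j → d j = 0 := fun j hj =>
    Nat.eq_zero_of_not_pos (fun h => absurd ((hsupp j).mp h) (not_lt.mpr hj))
  have hex : ∀ i : ℕ, ∃ j, d j ≤ i := fun i => ⟨k, by rw [hdk k le_rfl]; exact Nat.zero_le _⟩
  have key : ∀ i m : ℕ, ptranspose d i = m ↔ (d m ≤ i ∧ ∀ j < m, i < d j) := by
    intro i m
    constructor
    · intro h
      have hfind : d (Nat.find (hex i)) ≤ i := Nat.find_spec (hex i)
      have hlt : ∀ j < Nat.find (hex i), i < d j := fun j hj =>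
        lt_of_not_ge (Nat.find_min (hex i) hj)
      have hm : m = Nat.find (hex i) := by
        rw [← h, ptranspose_eq_of d hd i _ hfind hlt]
      subst hm
      exact ⟨hfind, hlt⟩
    · rintro ⟨h1, h2⟩
      exact ptranspose_eq_of d hd i m h1 h2
  -- reduce the "∀ j < m" condition to a single inequality for positive m
  have key' : ∀ i m : ℕ, 0 < m →
      (ptranspose d i = m ↔ (d m ≤ i ∧ i < d (m - 1))) := by
    intro i m hm
    rw [key]
    constructor
    · rintro ⟨h1, h2⟩
      exact ⟨h1, h2 (m - 1) (Nat.sub_lt hm one_pos)⟩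
    · rintro ⟨h1, h2⟩
      refine ⟨h1, fun j hj => lt_of_lt_of_le h2 (hd ?_)⟩
      omega
  refine ⟨?_, ?_, ?_⟩
  · exact ptranspose_eq_of d hd 0 k
      (by rw [hdk k le_rfl]) (fun j hj => (hsupp j).mpr hj)
  · have hset : {i : ℕ | ptranspose d i = k} = Set.Ico (d k) (d (k - 1)) := by
      ext i
      simp only [Set.mem_setOf_eq, Set.mem_Ico]
      exact key' i k hk
    rw [hset, Nat.card_coe_set_eq]
    simp [Set.ncard_eq_toFinset_card', Set.toFinset_Ico, hdk k le_rfl]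
  · intro m hm hmk
    have hset : {i : ℕ | ptranspose d i = m} = Set.Ico (d m) (d (m - 1)) := by
      ext i
      simp only [Set.mem_setOf_eq, Set.mem_Ico]
      exact key' i m hm
    rw [hset, Nat.card_coe_set_eq]
    rw [show (Set.Ico (d m) (d (m-1))).ncard = d (m-1) - d m by
      simp [Set.ncard_eq_toFinset_card', Set.toFinset_Ico]]
    rcases lt_or_gt_of_ne hmk with h | h
    · exact Nat.Odd.sub_odd (hodd (m - 1) (by omega)) (hodd m h)
    · rw [hdk (m - 1) (by omega)]
      simp
end

section
/- Let d be a partition of 2n+1. Then there exists a unique largest partition (in the dominance order) among partitions of 2n+1 that are dominated by d and lie in 𝒫₁(2n+1); this partition is called the B-collapse of d. Moreover, if d already lies in 𝒫₁(2n+1), its B-collapse is d itself. -/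
/-- `d` is a partition of `N`, encoded as a weakly decreasing function `ℕ → ℕ`
whose (0-indexed) parts beyond position `N` vanish and which sums to `N`. -/
def IsPartitionFun (N : ℕ) (d : ℕ → ℕ) : Prop :=
  Antitone d ∧ d N = 0 ∧ ∑ i ∈ Finset.range N, d i = N

/-- Dominance order on partitions of `N`: `Dominated d e` means `d ≤ e`, i.e. all
partial sums of `d` are bounded by those of `e`. -/
def Dominated (d e : ℕ → ℕ) : Prop :=
  ∀ m, ∑ i ∈ Finset.range m, d i ≤ ∑ i ∈ Finset.range m, e i

/-- `d ∈ 𝒫₁(N)`: every even (positive) part of `d` occurs with even multiplicity. -/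
noncomputable def MemP1 (d : ℕ → ℕ) : Prop :=
  ∀ r, Even r → 0 < r → Even (Nat.card {i : ℕ | d i = r})

lemma dom_refl (d : ℕ → ℕ) : Dominated d d := fun _ => le_refl _

lemma dom_trans {c d e : ℕ → ℕ} (h1 : Dominated c d) (h2 : Dominated d e) :
    Dominated c e := fun m => le_trans (h1 m) (h2 m)

lemma dom_antisymm {c d : ℕ → ℕ} (h1 : Dominated c d) (h2 : Dominated d c) : c = d := by
  funext i
  have e1 := le_antisymm (h1 i) (h2 i)
  have e2 := le_antisymm (h1 (i + 1)) (h2 (i + 1))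
  rw [Finset.sum_range_succ, Finset.sum_range_succ] at e2
  omega

/-- Parity lemma: if `k` counts the parts of `x` that are `≥ c`, and every even value
`≥ c` occurs with even multiplicity, then `(∑_{i<k} x i) + k` is even. -/
lemma even_sum_add_card (x : ℕ → ℕ) (k c : ℕ) (_hc : 0 < c)
    (hk : ∀ i, i < k ↔ c ≤ x i)
    (hm : ∀ v, Even v → c ≤ v → Even (Nat.card {i : ℕ | x i = v})) :
    Even ((∑ i ∈ Finset.range k, x i) + k) := by
  have h1 : (∑ i ∈ Finset.range k, x i) + k = ∑ i ∈ Finset.range k, (x i + 1) := by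
    rw [Finset.sum_add_distrib, Finset.sum_const, Finset.card_range, smul_eq_mul, mul_one]
  rw [h1]
  rw [← Finset.sum_fiberwise_of_maps_to (t := (Finset.range k).image x)
    (fun i hi => Finset.mem_image_of_mem x hi) (fun i => x i + 1)]
  apply Finset.even_sum
  intro v hv
  obtain ⟨i, hi, hxi⟩ := Finset.mem_image.mp hv
  have hcv : c ≤ v := hxi ▸ (hk i).mp (Finset.mem_range.mp hi)
  have hconst : ∑ j ∈ (Finset.range k).filter (fun j => x j = v), (x j + 1)
      = (((Finset.range k).filter (fun j => x j = v)).card) * (v + 1) := by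
    rw [Finset.sum_congr rfl (fun j hj => by
      rw [(Finset.mem_filter.mp hj).2]), Finset.sum_const, smul_eq_mul]
  rw [hconst]
  by_cases hev : Even v
  · have hset : {j : ℕ | x j = v} = ↑((Finset.range k).filter fun j => x j = v) := by
      ext j
      simp only [Set.mem_setOf_eq, Finset.coe_filter, Finset.mem_range]
      exact ⟨fun h => ⟨(hk j).mpr (h ▸ hcv), h⟩, fun h => h.2⟩
    have hev2 := hm v hev hcv
    rw [hset, Nat.card_coe_set_eq, Set.ncard_coe_finset] at hev2
    exact hev2.mul_right _
  · exact (Nat.even_add_one.mpr hev).mul_left _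

/-- One collapse step: if `d` is not in `P1`, produce a strictly smaller partition `d'`
(dominated by `d`, with smaller measure) that still dominates every `P1` partition
dominated by `d`. -/
lemma step_lemma (N : ℕ) (d : ℕ → ℕ) (hd : IsPartitionFun N d) (hP : ¬ MemP1 d) :
    ∃ d' : ℕ → ℕ, IsPartitionFun N d' ∧ Dominated d' d ∧
      (∑ m ∈ Finset.range N, ∑ i ∈ Finset.range (m + 1), d' i) <
        (∑ m ∈ Finset.range N, ∑ i ∈ Finset.range (m + 1), d i) ∧
      (∀ e, IsPartitionFun N e → MemP1 e → Dominated e d → Dominated e d') := by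
  obtain ⟨hanti, hdN, hsum⟩ := hd
  have hzero : ∀ i, N ≤ i → d i = 0 := fun i hi => Nat.le_zero.mp (hdN ▸ hanti hi)
  rcases Nat.eq_zero_or_pos N with hN0 | hNpos
  · exfalso; apply hP; intro r hr hrpos
    have hempty : {i : ℕ | d i = r} = ∅ := by
      ext i
      simp only [Set.mem_setOf_eq, Set.mem_empty_iff_false, iff_false]
      have := hzero i (hN0 ▸ Nat.zero_le i); omega
    rw [hempty]; simp
  have hcard : ∀ v, 0 < v → Nat.card {i : ℕ | d i = v}
      = ((Finset.range N).filter fun i => d i = v).card := by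
    intro v hv
    have hset : {i : ℕ | d i = v} = ↑((Finset.range N).filter fun i => d i = v) := by
      ext i
      simp only [Set.mem_setOf_eq, Finset.coe_filter, Finset.mem_range]
      refine ⟨fun h => ⟨?_, h⟩, fun h => h.2⟩
      by_contra hc
      have := hzero i (le_of_not_gt hc); omega
    rw [hset, Nat.card_coe_set_eq, Set.ncard_coe_finset]
  have hd0 : d 0 ≤ N := hsum ▸ Finset.single_le_sum (f := d)
      (fun i _ => Nat.zero_le _) (Finset.mem_range.mpr hNpos)
  -- the finset of "bad" even values
  set B := (Finset.range (N + 1)).filter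
    (fun v => Even v ∧ 0 < v ∧
      ¬ Even (((Finset.range N).filter fun i => d i = v).card)) with hBdef
  have hval_le : ∀ v, (((Finset.range N).filter fun i => d i = v).card ≠ 0) → v ≤ N := by
    intro v hv
    obtain ⟨i, hi⟩ := Finset.card_pos.mp (Nat.pos_of_ne_zero hv)
    obtain ⟨_, hdi⟩ := Finset.mem_filter.mp hi
    calc v = d i := hdi.symm
    _ ≤ d 0 := hanti (Nat.zero_le i)
    _ ≤ N := hd0
  have hBne : B.Nonempty := by
    simp only [MemP1, not_forall] at hP
    obtain ⟨r0, hr0e, hr0p, hr0bad⟩ := hP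
    rw [hcard r0 hr0p] at hr0bad
    refine ⟨r0, Finset.mem_filter.mpr ⟨Finset.mem_range.mpr ?_, hr0e, hr0p, hr0bad⟩⟩
    have := hval_le r0 (fun h => hr0bad (h ▸ Even.zero))
    omega
  set r := B.max' hBne with hrdef
  obtain ⟨hrN, hre, hrpos, hrbad⟩ :
      r ∈ Finset.range (N + 1) ∧ Even r ∧ 0 < r ∧
        ¬ Even (((Finset.range N).filter fun i => d i = r).card) := by
    have := Finset.mem_filter.mp (B.max'_mem hBne)
    exact ⟨this.1, this.2.1, this.2.2.1, this.2.2.2⟩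
  have hr2 : 2 ≤ r := by obtain ⟨w, hw⟩ := hre; omega
  have hmax : ∀ v, Even v → r < v → Even (Nat.card {i : ℕ | d i = v}) := by
    intro v hv hrv
    by_contra hbad
    rw [hcard v (by omega)] at hbad
    have hvN : v ≤ N := hval_le v (fun h => hbad (h ▸ Even.zero))
    have : v ∈ B := Finset.mem_filter.mpr
      ⟨Finset.mem_range.mpr (by omega), hv, by omega, hbad⟩
    exact absurd (Finset.le_max' B v this) (by omega)
  -- r occurs as a part
  have hrne : ∃ i, i < N ∧ d i = r := by
    have hpos : ((Finset.range N).filter fun i => d i = r).card ≠ 0 :=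
      fun h => hrbad (h ▸ Even.zero)
    obtain ⟨i, hi⟩ := Finset.card_pos.mp (Nat.pos_of_ne_zero hpos)
    obtain ⟨h1, h2⟩ := Finset.mem_filter.mp hi
    exact ⟨i, Finset.mem_range.mp h1, h2⟩
  clear_value r
  clear hrdef hBne hBdef
  -- p : first index with d i ≤ r
  have hex1 : ∃ i, d i < r + 1 := ⟨N, by omega⟩
  set p := Nat.find hex1 with hpdef
  have hp_spec : d p < r + 1 := Nat.find_spec hex1
  have hp_min : ∀ i, i < p → r + 1 ≤ d i := by
    intro i hi; have := Nat.find_min hex1 hi; omega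
  have hdp : d p = r := by
    obtain ⟨i0, _, hi0⟩ := hrne
    have h1 : p ≤ i0 := Nat.find_le (by omega)
    have := hanti h1
    omega
  -- Q : first index with d i < r
  have hex2 : ∃ i, d i < r := ⟨N, by omega⟩
  set Q := Nat.find hex2 with hQdef
  have hQ_spec : d Q < r := Nat.find_spec hex2
  have hQ_min : ∀ i, i < Q → r ≤ d i := by
    intro i hi; have := Nat.find_min hex2 hi; omega
  have hpQ : p < Q := by
    rcases lt_trichotomy p Q with h | h | h
    · exact h
    · exfalso; rw [h] at hdp; omega
    · exfalso; have := hp_min Q h; omega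
  -- s : first index with d i < r - 1
  have hex3 : ∃ i, d i < r - 1 := ⟨N, by omega⟩
  set s := Nat.find hex3 with hsdef
  have hs_spec : d s < r - 1 := Nat.find_spec hex3
  have hs_min : ∀ i, i < s → r - 1 ≤ d i := by
    intro i hi; have := Nat.find_min hex3 hi; omega
  have hQs : Q ≤ s := by
    by_contra h
    have := hQ_min s (by omega)
    omega
  have hp_le : ∀ i, d i ≤ r → p ≤ i := fun i hi => Nat.find_le (by omega)
  have hs_le : ∀ i, d i < r - 1 → s ≤ i := fun i hi => Nat.find_le hi
  clear_value p Q s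
  clear hpdef hQdef hsdef hex1 hex2 hex3
  -- values on blocks
  have hvalr : ∀ i, p ≤ i → i < Q → d i = r := by
    intro i h1 h2
    have := hanti h1
    have := hQ_min i h2
    omega
  have hvalr1 : ∀ i, Q ≤ i → i < s → d i = r - 1 := by
    intro i h1 h2
    have := hanti h1
    have := hs_min i h2
    omega
  have hsN : s < N := by
    have hdN1 : d (N - 1) = 0 := by
      by_contra hc
      have h1 : ∀ i ∈ Finset.Ico 1 N, 1 ≤ d i := by
        intro i hi
        obtain ⟨_, hi2⟩ := Finset.mem_Ico.mp hi
        have := hanti (show i ≤ N - 1 by omega)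
        omega
      have h2 : (Finset.Ico 1 N).card • 1 ≤ ∑ i ∈ Finset.Ico 1 N, d i :=
        Finset.card_nsmul_le_sum _ _ _ h1
      rw [Nat.card_Ico, smul_eq_mul, mul_one] at h2
      have h3 : ∑ i ∈ Finset.range 1, d i + ∑ i ∈ Finset.Ico 1 N, d i
          = ∑ i ∈ Finset.range N, d i := Finset.sum_range_add_sum_Ico d hNpos
      rw [Finset.sum_range_one, hsum] at h3
      have h4 : r ≤ d 0 := by
        have := hanti (Nat.zero_le p); omega
      omega
    have : s ≤ N - 1 := hs_le _ (by omega)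
    omega
  -- multiplicity of r is Q - p, and it is odd
  have hfilter_eq : ((Finset.range N).filter fun i => d i = r) = Finset.Ico p Q := by
    ext i
    simp only [Finset.mem_filter, Finset.mem_range, Finset.mem_Ico]
    constructor
    · rintro ⟨_, h2⟩
      constructor
      · exact hp_le i (by omega)
      · by_contra hc
        have := hanti (le_of_not_gt hc)
        omega
    · rintro ⟨h1, h2⟩
      exact ⟨by omega, hvalr i h1 h2⟩
  have hoddμ : ¬ Even (Q - p) := by
    rw [hfilter_eq, Nat.card_Ico] at hrbad
    exact hrbad
  -- define q := Q - 1
  set q := Q - 1 with hqdef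
  have hQq : Q = q + 1 := by omega
  clear_value q
  clear hqdef
  rw [hQq] at hoddμ
  have hqs : q < s := by omega
  have hdq : d q = r := hvalr q (by omega) (by omega)
  -- the new partition
  set d' : ℕ → ℕ := fun i => if i = q then d i - 1 else if i = s then d i + 1 else d i
    with hd'def
  have hv : ∀ j, d' j = if j = q then d j - 1 else if j = s then d j + 1 else d j :=
    fun j => rfl
  have hvq : d' q = d q - 1 := by rw [hv q, if_pos rfl]
  have hvs : d' s = d s + 1 := by rw [hv s, if_neg (by omega), if_pos rfl]
  have hvo : ∀ j, j ≠ q → j ≠ s → d' j = d j := by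
    intro j h1 h2; rw [hv j, if_neg h1, if_neg h2]
  clear_value d'
  clear hd'def
  -- partial sums identity
  have hS : ∀ m, (∑ i ∈ Finset.range m, d' i) + (if q < m then 1 else 0)
      = (∑ i ∈ Finset.range m, d i) + (if s < m then 1 else 0) := by
    intro m
    induction m with
    | zero => simp
    | succ m ih =>
      rw [Finset.sum_range_succ, Finset.sum_range_succ]
      by_cases h1 : m = q
      · subst h1
        rw [hvq]
        split_ifs at ih ⊢ <;> omega
      · by_cases h2 : m = s
        · subst h2
          rw [hvs]
          split_ifs at ih ⊢ <;> omega
        · rw [hvo m h1 h2]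
          split_ifs at ih ⊢ <;> omega
  -- antitonicity of d'
  have hstep : ∀ i, d' (i + 1) ≤ d' i := by
    intro i
    have m1 : d (i + 1) ≤ d i := hanti (by omega : i ≤ i + 1)
    rcases lt_trichotomy i q with hiq | hiq | hiq
    · -- i < q
      have g1 : d' i = d i := hvo i (by omega) (by omega)
      by_cases h4 : i + 1 = q
      · have g2 : d' (i+1) = d (i+1) - 1 := by rw [hv (i+1), if_pos h4]
        omega
      · have g2 : d' (i+1) = d (i+1) := hvo (i+1) h4 (by omega)
        omega
    · -- i = q
      rw [hiq]
      have g1 : d' q = r - 1 := by rw [hvq, hdq]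
      by_cases h4 : q + 1 = s
      · have g2 : d' (q+1) = d (q+1) + 1 := by
          rw [hv (q+1), if_neg (by omega), if_pos h4]
        have g3 : d (q+1) < r - 1 := by rw [h4]; exact hs_spec
        omega
      · have g2 : d' (q+1) = d (q+1) := hvo (q+1) (by omega) h4
        have g3 : d (q+1) = r - 1 := hvalr1 (q+1) (by omega) (by omega)
        omega
    · -- q < i
      rcases lt_trichotomy i s with his | his | his
      · -- q < i < s
        have g1 : d' i = d i := hvo i (by omega) (by omega)
        have hdi : d i = r - 1 := hvalr1 i (by omega) (by omega)
        by_cases h4 : i + 1 = s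
        · have g2 : d' (i+1) = d (i+1) + 1 := by
            rw [hv (i+1), if_neg (by omega), if_pos h4]
          have g3 : d (i+1) < r - 1 := by rw [h4]; exact hs_spec
          omega
        · have g2 : d' (i+1) = d (i+1) := hvo (i+1) (by omega) h4
          have g3 : d (i+1) = r - 1 := hvalr1 (i+1) (by omega) (by omega)
          omega
      · -- i = s
        have g1 : d' (i+1) = d (i+1) := hvo (i+1) (by omega) (by omega)
        have g2 : d' i = d i + 1 := by rw [his]; exact hvs
        omega
      · -- s < i
        have g1 : d' i = d i := hvo i (by omega) (by omega)
        have g2 : d' (i+1) = d (i+1) := hvo (i+1) (by omega) (by omega)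
        omega
  have hd'anti : Antitone d' := antitone_nat_of_succ_le hstep
  have hd'N : d' N = 0 := by
    rw [hvo N (by omega) (by omega)]; exact hdN
  have hd'sum : ∑ i ∈ Finset.range N, d' i = N := by
    have := hS N
    rw [if_pos (by omega), if_pos (by omega)] at this
    omega
  have hdom : Dominated d' d := by
    intro m
    have := hS m
    split_ifs at this <;> omega
  refine ⟨d', ⟨hd'anti, hd'N, hd'sum⟩, hdom, ?_, ?_⟩
  · -- measure decreases
    apply Finset.sum_lt_sum
    · intro m _
      exact hdom (m + 1)
    · refine ⟨q, Finset.mem_range.mpr (by omega), ?_⟩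
      have := hS (q + 1)
      rw [if_pos (by omega), if_neg (by omega)] at this
      omega
  · -- key maximality property
    intro e he heP1 hed m
    obtain ⟨heanti, heN, hesum⟩ := he
    by_cases hm1 : q < m ∧ m ≤ s
    · obtain ⟨hqm, hms⟩ := hm1
      have hSm := hS m
      rw [if_pos hqm, if_neg (by omega)] at hSm
      -- suffices strict inequality against d
      rcases lt_or_eq_of_le (hed m) with hlt | heq
      · omega
      · exfalso
        -- equality of partial sums at m
        have hem : e m ≤ d m := by
          have h1 := hed (m + 1)
          rw [Finset.sum_range_succ, Finset.sum_range_succ] at h1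
          omega
        have hdm : d m ≤ r - 1 := by
          have := hanti (show Q ≤ m by omega)
          omega
        have hemr : e m < r := by omega
        have hexk : ∃ i, e i < r := ⟨m, by omega⟩
        set k := Nat.find hexk with hkdef
        have hk_spec : e k < r := Nat.find_spec hexk
        have hk_min : ∀ i, i < k → r ≤ e i := by
          intro i hi; have := Nat.find_min hexk hi; omega
        have hkm : k ≤ m := Nat.find_le (by omega)
        have hek : ∀ i, k ≤ i → e i ≤ r - 1 := by
          intro i hi; have := heanti hi; omega
        have hkiff : ∀ i, i < k ↔ r ≤ e i := by
          intro i
          constructor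
          · exact hk_min i
          · intro h
            by_contra hc
            have := hek i (le_of_not_gt hc)
            omega
        clear_value k
        clear hkdef hexk
        rcases le_or_gt k q with hkq | hqk
        · -- Case A : k ≤ q, derive strict inequality at Q = q+1
          have heqQ : ∑ i ∈ Finset.range (q+1), e i = ∑ i ∈ Finset.range (q+1), d i := by
            have hsplit_e := Finset.sum_range_add_sum_Ico e (show q + 1 ≤ m by omega)
            have hsplit_d := Finset.sum_range_add_sum_Ico d (show q + 1 ≤ m by omega)
            have hIco : ∑ i ∈ Finset.Ico (q+1) m, e i ≤ ∑ i ∈ Finset.Ico (q+1) m, d i := by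
              apply Finset.sum_le_sum
              intro i hi
              obtain ⟨hi1, hi2⟩ := Finset.mem_Ico.mp hi
              have h5 := hvalr1 i (by omega) (by omega)
              have h6 := hek i (by omega)
              omega
            have h7 := hed (q + 1)
            omega
          -- but also strictly smaller
          have hIcoE : ∑ i ∈ Finset.Ico k (q+1), e i ≤ (q + 1 - k) * (r - 1) := by
            have := Finset.sum_le_card_nsmul (Finset.Ico k (q+1)) e (r - 1)
              (fun i hi => hek i (Finset.mem_Ico.mp hi).1)
            rwa [Nat.card_Ico, smul_eq_mul] at this
          have hIcoD : (q + 1 - k) * r ≤ ∑ i ∈ Finset.Ico k (q+1), d i := by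
            have := Finset.card_nsmul_le_sum (Finset.Ico k (q+1)) d r
              (fun i hi => hQ_min i (by have := (Finset.mem_Ico.mp hi).2; omega))
            rwa [Nat.card_Ico, smul_eq_mul] at this
          have hsplit_e := Finset.sum_range_add_sum_Ico e (show k ≤ q + 1 by omega)
          have hsplit_d := Finset.sum_range_add_sum_Ico d (show k ≤ q + 1 by omega)
          have hedk := hed k
          have hmul : (q + 1 - k) * (r - 1) + (q + 1 - k) * 1 = (q + 1 - k) * r := by
            rw [← Nat.mul_add]
            congr 1
            omega
          have hone : 1 ≤ q + 1 - k := by omega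
          have : (q + 1 - k) * 1 ≥ 1 := by omega
          omega
        · -- Case B : q < k, parity contradiction
          have hQk : q + 1 ≤ k := hqk
          -- equality of partial sums at k
          have heqk : ∑ i ∈ Finset.range k, e i = ∑ i ∈ Finset.range k, d i := by
            have hsplit_e := Finset.sum_range_add_sum_Ico e hkm
            have hsplit_d := Finset.sum_range_add_sum_Ico d hkm
            have hIco : ∑ i ∈ Finset.Ico k m, e i ≤ ∑ i ∈ Finset.Ico k m, d i := by
              apply Finset.sum_le_sum
              intro i hi
              obtain ⟨hi1, hi2⟩ := Finset.mem_Ico.mp hi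
              have h5 := hvalr1 i (by omega) (by omega)
              have h6 := hek i hi1
              omega
            have h7 := hed k
            omega
          -- decomposition of the d-partial sum at k
          have hdecomp : ∑ i ∈ Finset.range k, d i
              = (∑ i ∈ Finset.range p, d i) + (q + 1 - p) * r + (k - (q+1)) * (r - 1) := by
            have h1 : ∑ i ∈ Finset.Ico p (q+1), d i = (q + 1 - p) * r := by
              rw [Finset.sum_congr rfl (fun i hi => by
                obtain ⟨hi1, hi2⟩ := Finset.mem_Ico.mp hi
                exact hvalr i hi1 (by omega)), Finset.sum_const, Nat.card_Ico, smul_eq_mul]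
            have h2 : ∑ i ∈ Finset.Ico (q+1) k, d i = (k - (q+1)) * (r - 1) := by
              rw [Finset.sum_congr rfl (fun i hi => by
                obtain ⟨hi1, hi2⟩ := Finset.mem_Ico.mp hi
                exact hvalr1 i (by omega) (by omega)), Finset.sum_const, Nat.card_Ico,
                smul_eq_mul]
            have h3 := Finset.sum_range_add_sum_Ico d (show p ≤ q + 1 by omega)
            have h4 := Finset.sum_range_add_sum_Ico d (show q + 1 ≤ k by omega)
            omega
          -- parity facts
          have hEe : Even ((∑ i ∈ Finset.range k, e i) + k) :=
            even_sum_add_card e k r hrpos hkiff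
              (fun v hv hrv => heP1 v hv (by omega))
          have hEd : Even ((∑ i ∈ Finset.range p, d i) + p) := by
            apply even_sum_add_card d p (r + 1) (by omega)
            · intro i
              constructor
              · exact hp_min i
              · intro h
                by_contra hc
                have := hanti (le_of_not_gt hc)
                omega
            · exact fun v hv h => hmax v hv (by omega)
          have hmulq : Even ((q + 1 - p) * r) := hre.mul_left _
          have hmulk : Even ((k - (q+1)) * r) := hre.mul_left _
          have hmul2 : (k - (q+1)) * (r - 1) + (k - (q+1)) * 1 = (k - (q+1)) * r := by
            rw [← Nat.mul_add]
            congr 1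
            omega
          -- put everything together
          set Se := ∑ i ∈ Finset.range k, e i with hSe
          set Sdp := ∑ i ∈ Finset.range p, d i with hSdp
          set A1 := (q + 1 - p) * r with hA1
          set A2 := (k - (q+1)) * (r - 1) with hA2
          set A3 := (k - (q+1)) * r with hA3
          have hkey : Se + k = ((Sdp + p) + A1 + A3) + (q + 1 - p) := by omega
          have hX : Even ((Sdp + p) + A1 + A3) := (hEd.add hmulq).add hmulk
          rw [hkey] at hEe
          exact hoddμ ((Nat.even_add.mp hEe).mp hX)
    · -- outside the critical window the partial sums agree
      have hSm := hS m
      have hedm := hed m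
      split_ifs at hSm <;> omega

lemma exists_max (N : ℕ) (K : ℕ) : ∀ d : ℕ → ℕ,
    (∑ m ∈ Finset.range N, ∑ i ∈ Finset.range (m + 1), d i) < K →
    IsPartitionFun N d →
    ∃ c : ℕ → ℕ, IsPartitionFun N c ∧ MemP1 c ∧ Dominated c d ∧
      ∀ e : ℕ → ℕ, IsPartitionFun N e → MemP1 e → Dominated e d → Dominated e c := by
  induction K with
  | zero => intro d h _; exact absurd h (Nat.not_lt_zero _)
  | succ K ih =>
    intro d hK hd
    by_cases hP : MemP1 d
    · exact ⟨d, hd, hP, dom_refl d, fun e _ _ he => he⟩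
    · obtain ⟨d', hd', hdom, hmeas, hkey⟩ := step_lemma N d hd hP
      obtain ⟨c, hc1, hc2, hc3, hc4⟩ := ih d' (by omega) hd'
      exact ⟨c, hc1, hc2, dom_trans hc3 hdom, fun e he1 he2 he3 =>
        hc4 e he1 he2 (hkey e he1 he2 he3)⟩

/-- For any partition `d` of `2n+1` there exists a unique largest partition (in the
dominance order) among partitions of `2n+1` dominated by `d` and lying in
`𝒫₁(2n+1)` — the B-collapse of `d`.  Moreover, if `d` already lies in `𝒫₁(2n+1)`,
its B-collapse is `d` itself. -/
theorem bCollapse_existsUnique (n : ℕ) (d : ℕ → ℕ)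
    (hd : IsPartitionFun (2 * n + 1) d) :
    (∃! c : ℕ → ℕ, IsPartitionFun (2 * n + 1) c ∧ MemP1 c ∧ Dominated c d ∧
        ∀ e : ℕ → ℕ, IsPartitionFun (2 * n + 1) e → MemP1 e → Dominated e d →
          Dominated e c) ∧
    (MemP1 d → ∀ c : ℕ → ℕ,
        (IsPartitionFun (2 * n + 1) c ∧ MemP1 c ∧ Dominated c d ∧
          ∀ e : ℕ → ℕ, IsPartitionFun (2 * n + 1) e → MemP1 e → Dominated e d →
            Dominated e c) → c = d) := by
  obtain ⟨c, hc1, hc2, hc3, hc4⟩ :=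
    exists_max (2 * n + 1)
      ((∑ m ∈ Finset.range (2 * n + 1), ∑ i ∈ Finset.range (m + 1), d i) + 1) d
      (Nat.lt_succ_self _) hd
  constructor
  · refine ⟨c, ⟨hc1, hc2, hc3, hc4⟩, ?_⟩
    rintro c' ⟨h1, h2, h3, h4⟩
    exact dom_antisymm (hc4 c' h1 h2 h3) (h4 c hc1 hc2 hc3)
  · rintro hP c' ⟨h1, h2, h3, h4⟩
    exact dom_antisymm h3 (h4 d hd hP (dom_refl d))
end
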